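/- Let d ≥ 1, λ > 0 and z ∈ ℝ^d with z ≠ 0, and let x* be a global minimizer of φ(x) = (1/2)‖x − z‖₂² + λ(‖x‖₁ − ‖x‖₂). Then x* ≠ 0, and for every coordinate i the following first-order optimality conditions hold: (a) if x*_i ≠ 0 then x*_i − z_i + λ·sign(x*_i) − λ·x*_i/‖x*‖₂ = 0; (b) if x*_i = 0 then |z_i| ≤ λ. -/

import Mathlib

private lemma sum_update_eq {d : ℕ} (x : Fin d → ℝ) (i : Fin d) (v : ℝ)
    (f : Fin d → ℝ → ℝ) :
    ∑ j, f j (Function.update x i v j) = (∑ j, f j (x j)) + (f i v - f i (x i)) := by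
  have h1 : ∑ j, (f j (Function.update x i v j) - f j (x j)) = f i v - f i (x i) := by
    rw [Finset.sum_eq_single i]
    · simp
    · intro j _ hj
      rw [Function.update_of_ne hj]
      ring
    · simp
  rw [Finset.sum_sub_distrib] at h1
  linarith

theorem l12_prox_first_order_conditions
    (d : ℕ) (hd : 1 ≤ d) (lam : ℝ) (hlam : 0 < lam) (z : Fin d → ℝ) (hz : z ≠ 0)
    (phi : (Fin d → ℝ) → ℝ)
    (hphi : ∀ x : Fin d → ℝ, phi x =
      (1 / 2) * (∑ i, (x i - z i) ^ 2)
        + lam * ((∑ i, |x i|) - Real.sqrt (∑ i, (x i) ^ 2)))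
    (xstar : Fin d → ℝ) (hxstar : ∀ y : Fin d → ℝ, phi xstar ≤ phi y) :
    xstar ≠ 0 ∧
      (∀ i : Fin d, xstar i ≠ 0 →
        xstar i - z i + lam * Real.sign (xstar i)
          - lam * xstar i / Real.sqrt (∑ j, (xstar j) ^ 2) = 0) ∧
      (∀ i : Fin d, xstar i = 0 → |z i| ≤ lam) := by
  -- Part 1: xstar ≠ 0
  have hx0 : xstar ≠ 0 := by
    intro h0
    obtain ⟨j, hj⟩ : ∃ j, z j ≠ 0 := Function.ne_iff.mp hz
    set y : Fin d → ℝ := Function.update (0 : Fin d → ℝ) j (z j) with hy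
    have hs1 : ∑ k, (y k - z k) ^ 2 = (∑ k, ((0:ℝ) - z k) ^ 2) + (((z j) - z j)^2 - ((0:ℝ) - z j)^2) :=
      sum_update_eq (0 : Fin d → ℝ) j (z j) (fun k a => (a - z k) ^ 2)
    have hs2 : ∑ k, |y k| = (∑ k, |(0:ℝ)|) + (|z j| - |(0:ℝ)|) :=
      sum_update_eq (0 : Fin d → ℝ) j (z j) (fun _ a => |a|)
    have hs3 : ∑ k, (y k) ^ 2 = (∑ k, ((0:ℝ)) ^ 2) + ((z j)^2 - ((0:ℝ))^2) :=
      sum_update_eq (0 : Fin d → ℝ) j (z j) (fun _ a => a ^ 2)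
    have h := hxstar y
    rw [h0, hphi, hphi, hs1, hs2, hs3] at h
    simp only [Pi.zero_apply, zero_sub, neg_sq, sub_zero, abs_zero, Finset.sum_const_zero,
      ne_eq, OfNat.ofNat_ne_zero, not_false_eq_true, zero_pow, zero_add,
      Real.sqrt_zero, add_zero, mul_zero, sub_self, sub_zero] at h
    rw [Real.sqrt_sq_eq_abs] at h
    have hzj2 : 0 < z j ^ 2 := by positivity
    nlinarith [h]
  refine ⟨hx0, ?_⟩
  -- Common setup
  set T : ℝ := ∑ j, (xstar j) ^ 2 with hT
  obtain ⟨j0, hj0⟩ : ∃ j, xstar j ≠ 0 := Function.ne_iff.mp hx0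
  have hTpos : 0 < T := by
    have h1 : (xstar j0) ^ 2 ≤ T := by
      apply Finset.single_le_sum (f := fun j => (xstar j) ^ 2)
      · intro k _; positivity
      · simp
    have h2 : 0 < (xstar j0) ^ 2 := pow_two_pos_of_ne_zero hj0
    linarith
  have hTs : 0 < Real.sqrt T := Real.sqrt_pos.mpr hTpos
  -- key reduction: for each coordinate i, the 1-d function g is minimized at xstar i
  have key : ∀ i : Fin d, ∀ v : ℝ,
      (1/2) * (xstar i - z i)^2 + lam * |xstar i| - lam * Real.sqrt T
        ≤ (1/2) * (v - z i)^2 + lam * |v|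
          - lam * Real.sqrt ((T - (xstar i)^2) + v^2) := by
    intro i v
    have hs1 : ∑ k, (Function.update xstar i v k - z k) ^ 2
        = (∑ k, (xstar k - z k) ^ 2) + ((v - z i)^2 - (xstar i - z i)^2) :=
      sum_update_eq xstar i v (fun k a => (a - z k) ^ 2)
    have hs2 : ∑ k, |Function.update xstar i v k|
        = (∑ k, |xstar k|) + (|v| - |xstar i|) :=
      sum_update_eq xstar i v (fun _ a => |a|)
    have hs3 : ∑ k, (Function.update xstar i v k) ^ 2
        = (∑ k, (xstar k) ^ 2) + (v^2 - (xstar i)^2) :=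
      sum_update_eq xstar i v (fun _ a => a ^ 2)
    have h := hxstar (Function.update xstar i v)
    rw [hphi, hphi, hs1, hs2, hs3] at h
    have he : (∑ k, (xstar k) ^ 2) + (v^2 - (xstar i)^2)
        = (T - (xstar i)^2) + v^2 := by rw [← hT]; ring
    rw [he] at h
    rw [← hT] at h
    linarith
  constructor
  · -- Part (a): xstar i ≠ 0
    intro i hi
    set a : ℝ := xstar i with ha
    set S : ℝ := T - a^2 with hS
    have hSa : S + a^2 = T := by ring
    set g : ℝ → ℝ := fun v => (1/2) * (v - z i)^2 + lam * |v|
      - lam * Real.sqrt (S + v^2) with hg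
    have hmin : IsLocalMin g a := by
      apply Filter.Eventually.of_forall
      intro v
      have h := key i v
      have e2 : Real.sqrt T = Real.sqrt (S + a^2) := by rw [hSa]
      have e1 : T - a^2 + v^2 = S + v^2 := by ring
      rw [e2, e1] at h
      exact h
    -- derivative
    have h1 : HasDerivAt (fun v : ℝ => (1/2) * (v - z i)^2) (a - z i) a := by
      have := (((hasDerivAt_id a).sub_const (z i)).pow 2).const_mul (1/2 : ℝ)
      refine this.congr_deriv ?_
      simp only [id_eq]
      push_cast
      ring
    have habs : HasDerivAt (fun v : ℝ => |v|) (Real.sign a) a := by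
      have h := hasDerivAt_abs hi
      rcases lt_or_gt_of_ne hi with hneg | hpos
      · rw [Real.sign_of_neg hneg]
        simpa [hneg] using h
      · rw [Real.sign_of_pos hpos]
        simpa [hpos, not_lt.mpr hpos.le] using h
    have h2 : HasDerivAt (fun v : ℝ => lam * |v|) (lam * Real.sign a) a :=
      habs.const_mul lam
    have hinner : HasDerivAt (fun v : ℝ => S + v^2) (2 * a) a := by
      have := (hasDerivAt_pow 2 a).const_add S
      refine this.congr_deriv ?_
      ring
    have hne : S + a^2 ≠ 0 := by rw [hSa]; exact ne_of_gt hTpos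
    have h3 : HasDerivAt (fun v : ℝ => lam * Real.sqrt (S + v^2))
        (lam * (2 * a / (2 * Real.sqrt (S + a^2)))) a :=
      (hinner.sqrt hne).const_mul lam
    have hder : HasDerivAt g
        ((a - z i) + lam * Real.sign a - lam * (2 * a / (2 * Real.sqrt (S + a^2)))) a :=
      (h1.add h2).sub h3
    have hzero := hmin.hasDerivAt_eq_zero hder
    rw [hSa] at hzero
    have hc : 2 * a / (2 * Real.sqrt T) = a / Real.sqrt T :=
      mul_div_mul_left a (Real.sqrt T) two_ne_zero
    rw [hc] at hzero
    rw [mul_div_assoc]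
    linarith
  · -- Part (b): xstar i = 0
    intro i hi
    have hkey : ∀ v : ℝ, v * z i ≤ (1/2) * v^2 + lam * |v| := by
      intro v
      have h := key i v
      rw [hi] at h
      simp only [zero_sub, neg_sq, abs_zero, mul_zero, add_zero] at h
      have he : T - 0^2 + v^2 = T + v^2 := by ring
      rw [he] at h
      have hmono : Real.sqrt T ≤ Real.sqrt (T + v^2) :=
        Real.sqrt_le_sqrt (by nlinarith [sq_nonneg v])
      have hmul : lam * Real.sqrt T ≤ lam * Real.sqrt (T + v^2) :=
        mul_le_mul_of_nonneg_left hmono hlam.le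
      have hx : (v - z i)^2 = v^2 - 2*v*z i + (z i)^2 := by ring
      rw [hx] at h
      linarith
    have hstep : ∀ t : ℝ, 0 < t → |z i| ≤ lam + t/2 := by
      intro t ht
      rcases le_or_gt 0 (z i) with hzi | hzi
      · have h := hkey t
        rw [abs_of_pos ht] at h
        rw [abs_of_nonneg hzi]
        have h2 : t * z i ≤ t * (lam + t/2) := by nlinarith
        exact le_of_mul_le_mul_left h2 ht
      · have h := hkey (-t)
        rw [abs_of_neg (show -t < 0 by linarith)] at h
        rw [abs_of_neg hzi]
        have h2 : t * (-z i) ≤ t * (lam + t/2) := by nlinarith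
        exact le_of_mul_le_mul_left h2 ht
    apply le_of_forall_pos_le_add
    intro ε hε
    have := hstep (2*ε) (by linarith)
    linarith
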